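/- Let n ≥ 2, let (a, b) be an open interval containing 0, let C ≥ 0 be a constant, and let f : ℝ → ℂ be infinitely differentiable on (a, b) satisfying the differential inequality |f⁽ⁿ⁾(x)| ≤ C · Σ_{k=0}^{n-1} |f⁽ᵏ⁾(x)| / |x|^{n-k} for all x ∈ (a, b) with x ≠ 0. If f⁽ᵏ⁾(0) = 0 for all k ≥ 0, then f ≡ 0 on (a, b). -/

import Mathlib

open Filter Topology

lemma taylor_flat (a b : ℝ) (ha : a < 0) (hb : 0 < b) (f : ℝ → ℂ)
    (hsmooth : ∀ k : ℕ, ∀ x ∈ Set.Ioo a b, DifferentiableAt ℝ (iteratedDeriv k f) x)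
    (hflat : ∀ k : ℕ, iteratedDeriv k f 0 = 0) :
    ∀ m k : ℕ, ∃ M : ℝ, 0 ≤ M ∧ ∀ x ∈ Set.Icc (a/2) (b/2),
      ‖iteratedDeriv k f x‖ ≤ M * |x| ^ m := by
  have hsub : Set.Icc (a/2) (b/2) ⊆ Set.Ioo a b := fun x hx =>
    ⟨by nlinarith [hx.1], by nlinarith [hx.2]⟩
  intro m
  induction m with
  | zero =>
    intro k
    have hcont : ContinuousOn (iteratedDeriv k f) (Set.Icc (a/2) (b/2)) :=
      fun x hx => ((hsmooth k x (hsub hx)).continuousAt).continuousWithinAt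
    obtain ⟨M, hM⟩ := (isCompact_Icc).exists_bound_of_continuousOn hcont
    refine ⟨max M 0, le_max_right _ _, fun x hx => ?_⟩
    simpa using (hM x hx).trans (le_max_left M 0)
  | succ m ih =>
    intro k
    obtain ⟨M, hM0, hM⟩ := ih (k + 1)
    refine ⟨M, hM0, fun x hx => ?_⟩
    have h0mem : (0:ℝ) ∈ Set.Icc (a/2) (b/2) := ⟨by linarith, by linarith⟩
    have hxmem : Set.uIcc 0 x ⊆ Set.Icc (a/2) (b/2) := Set.uIcc_subset_Icc h0mem hx
    have habs : ∀ y ∈ Set.uIcc 0 x, |y| ≤ |x| := by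
      intro y hy
      rcases Set.mem_uIcc.mp hy with h | h
      · rw [abs_of_nonneg h.1]; exact (h.2).trans (le_abs_self x)
      · rw [abs_of_nonpos h.2]; exact (neg_le_abs x).trans' (by linarith [h.1])
    have hder : ∀ y ∈ Set.uIcc 0 x, HasDerivWithinAt (iteratedDeriv k f)
        (iteratedDeriv (k+1) f y) (Set.uIcc 0 x) y := by
      intro y hy
      have := (hsmooth k y (hsub (hxmem hy))).hasDerivAt
      rw [iteratedDeriv_succ]
      exact this.hasDerivWithinAt
    have hbound : ∀ y ∈ Set.uIcc 0 x, ‖iteratedDeriv (k+1) f y‖ ≤ M * |x| ^ m := by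
      intro y hy
      exact (hM y (hxmem hy)).trans
        (mul_le_mul_of_nonneg_left (pow_le_pow_left₀ (abs_nonneg y) (habs y hy) m) hM0)
    have := Convex.norm_image_sub_le_of_norm_hasDerivWithin_le hder hbound
      (convex_uIcc 0 x) (Set.left_mem_uIcc) (Set.right_mem_uIcc)
    simp only [hflat k, sub_zero, Real.norm_eq_abs] at this
    calc ‖iteratedDeriv k f x‖ ≤ M * |x| ^ m * |x| := this
      _ = M * |x| ^ (m+1) := by ring

lemma pos_side
    (n : ℕ) (hn : 2 ≤ n) (a b : ℝ) (ha : a < 0) (hb : 0 < b)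
    (C : ℝ) (hC : 0 ≤ C) (f : ℝ → ℂ)
    (hsmooth : ∀ k : ℕ, ∀ x ∈ Set.Ioo a b, DifferentiableAt ℝ (iteratedDeriv k f) x)
    (hineq : ∀ x ∈ Set.Ioo a b, x ≠ 0 →
      ‖iteratedDeriv n f x‖ ≤ C * ∑ k ∈ Finset.range n, ‖iteratedDeriv k f x‖ / |x| ^ (n - k))
    (hflat : ∀ k : ℕ, iteratedDeriv k f 0 = 0) :
    ∀ T ∈ Set.Ioo 0 b, f T = 0 := by
  intro T hT
  have hn0 : 0 < n := by omega
  set N : ℕ := n + 1 + ⌈C⌉₊ * n with hN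
  choose M hM0 hM using fun k => taylor_flat a b ha hb f hsmooth hflat (N+1) k
  set M₁ : ℝ := ∑ k ∈ Finset.range n, M k with hM₁
  have hM₁0 : 0 ≤ M₁ := Finset.sum_nonneg fun k _ => hM0 k
  have hMle : ∀ k < n, M k ≤ M₁ := fun k hk =>
    Finset.single_le_sum (fun i _ => hM0 i) (Finset.mem_range.mpr hk)
  -- the vector function
  set G : ℝ → Fin n → ℂ := fun x i => x ^ (i:ℕ) • iteratedDeriv i f x with hG
  set G' : ℝ → Fin n → ℂ := fun x i =>
    x ^ (i:ℕ) • iteratedDeriv ((i:ℕ)+1) f x +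
      (((i:ℕ):ℝ) * x ^ ((i:ℕ)-1)) • iteratedDeriv i f x with hG'
  have hGderiv : ∀ x ∈ Set.Ioo a b, HasDerivAt G (G' x) x := by
    intro x hx
    rw [hasDerivAt_pi]
    intro i
    have hk : HasDerivAt (iteratedDeriv (i:ℕ) f) (iteratedDeriv ((i:ℕ)+1) f x) x := by
      rw [iteratedDeriv_succ]
      exact (hsmooth i x hx).hasDerivAt
    exact (hasDerivAt_pow (i:ℕ) x).smul hk
  -- norm of components of G
  have hGcomp : ∀ x : ℝ, 0 < x → ∀ i : Fin n, ‖G x i‖ = x ^ (i:ℕ) * ‖iteratedDeriv i f x‖ := by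
    intro x hx i
    rw [hG, norm_smul, Real.norm_eq_abs, abs_pow, abs_of_pos hx]
  -- key derivative bound
  have hGbound : ∀ x ∈ Set.Ioo 0 b, ‖G' x‖ ≤ ((N:ℝ) * ‖G x‖) / x := by
    intro x hx
    have hx0 : 0 < x := hx.1
    have hxab : x ∈ Set.Ioo a b := ⟨lt_trans ha hx.1, hx.2⟩
    have hnonneg : 0 ≤ ((N:ℝ) * ‖G x‖) / x := by positivity
    rw [pi_norm_le_iff_of_nonneg hnonneg]
    intro i
    rw [le_div_iff₀ hx0]
    have hxabs : |x| = x := abs_of_pos hx0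
    have hNge : (n:ℝ) + 1 + C * n ≤ (N:ℝ) := by
      have h1 : C ≤ (⌈C⌉₊ : ℝ) := Nat.le_ceil C
      have h2 : ((n + 1 + ⌈C⌉₊ * n : ℕ) : ℝ) = (n:ℝ) + 1 + (⌈C⌉₊:ℝ) * n := by push_cast; ring
      rw [hN, h2]
      nlinarith [Nat.cast_nonneg (α := ℝ) n]
    have htri : ‖G' x i‖ ≤ x ^ (i:ℕ) * ‖iteratedDeriv ((i:ℕ)+1) f x‖
        + ((i:ℕ):ℝ) * x ^ ((i:ℕ)-1) * ‖iteratedDeriv (i:ℕ) f x‖ := by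
      rw [hG']
      refine (norm_add_le _ _).trans ?_
      rw [norm_smul, norm_smul, Real.norm_eq_abs, Real.norm_eq_abs, abs_of_pos (pow_pos hx0 _),
        abs_of_nonneg (by positivity)]
    have hterm2 : ((i:ℕ):ℝ) * x ^ ((i:ℕ)-1) * ‖iteratedDeriv (i:ℕ) f x‖ * x ≤ (n:ℝ) * ‖G x‖ := by
      rcases Nat.eq_zero_or_pos (i:ℕ) with h0 | hpos
      · rw [h0]
        simp only [Nat.cast_zero, zero_mul]
        positivity
      · have hxp : x ^ ((i:ℕ)-1) * x = x ^ (i:ℕ) := by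
          rw [← pow_succ]
          congr 1
          omega
        calc ((i:ℕ):ℝ) * x ^ ((i:ℕ)-1) * ‖iteratedDeriv (i:ℕ) f x‖ * x
            = ((i:ℕ):ℝ) * (x ^ ((i:ℕ)-1) * x * ‖iteratedDeriv (i:ℕ) f x‖) := by ring
          _ = ((i:ℕ):ℝ) * ‖G x i‖ := by rw [hxp, hGcomp x hx0 i]
          _ ≤ (n:ℝ) * ‖G x‖ := by
              have h1 : ((i:ℕ):ℝ) ≤ (n:ℝ) := by exact_mod_cast i.2.le
              exact mul_le_mul h1 (norm_le_pi_norm (G x) i) (norm_nonneg _)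
                (Nat.cast_nonneg n)
    have hterm1 : x ^ (i:ℕ) * ‖iteratedDeriv ((i:ℕ)+1) f x‖ * x ≤ (1 + C * n) * ‖G x‖ := by
      have hsucc : x ^ (i:ℕ) * ‖iteratedDeriv ((i:ℕ)+1) f x‖ * x
          = x ^ ((i:ℕ)+1) * ‖iteratedDeriv ((i:ℕ)+1) f x‖ := by rw [pow_succ]; ring
      rcases lt_or_eq_of_le (Nat.succ_le_of_lt i.2) with hlt | heq
      · have : x ^ ((i:ℕ)+1) * ‖iteratedDeriv ((i:ℕ)+1) f x‖ = ‖G x ⟨(i:ℕ)+1, hlt⟩‖ :=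
          (hGcomp x hx0 ⟨(i:ℕ)+1, hlt⟩).symm
        rw [hsucc, this]
        have h1 : ‖G x ⟨(i:ℕ)+1, hlt⟩‖ ≤ ‖G x‖ := norm_le_pi_norm (G x) _
        nlinarith [norm_nonneg (G x), mul_nonneg hC (Nat.cast_nonneg (α := ℝ) n),
          mul_nonneg (mul_nonneg hC (Nat.cast_nonneg (α := ℝ) n)) (norm_nonneg (G x))]
      · rw [hsucc, show (i:ℕ)+1 = n from heq]
        have key := hineq x hxab hx0.ne'
        have hsum : x ^ n * (∑ k ∈ Finset.range n, ‖iteratedDeriv k f x‖ / |x| ^ (n - k))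
            = ∑ k ∈ Finset.range n, x ^ k * ‖iteratedDeriv k f x‖ := by
          rw [Finset.mul_sum]
          refine Finset.sum_congr rfl fun j hj => ?_
          have hjn : j ≤ n := (Finset.mem_range.mp hj).le
          have hpow : x ^ (n - j) * x ^ j = x ^ n := pow_sub_mul_pow x hjn
          rw [hxabs]
          rw [← hpow]
          have hne : x ^ (n - j) ≠ 0 := (pow_pos hx0 _).ne'
          field_simp
        calc x ^ n * ‖iteratedDeriv n f x‖
            ≤ x ^ n * (C * ∑ k ∈ Finset.range n, ‖iteratedDeriv k f x‖ / |x| ^ (n - k)) := by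
              exact mul_le_mul_of_nonneg_left key (pow_pos hx0 n).le
          _ = C * ∑ k ∈ Finset.range n, x ^ k * ‖iteratedDeriv k f x‖ := by
              rw [← hsum]; ring
          _ ≤ C * ∑ _k ∈ Finset.range n, ‖G x‖ := by
              refine mul_le_mul_of_nonneg_left (Finset.sum_le_sum fun j hj => ?_) hC
              have hjn := Finset.mem_range.mp hj
              rw [← hGcomp x hx0 ⟨j, hjn⟩]
              exact norm_le_pi_norm (G x) _
          _ = C * (n * ‖G x‖) := by rw [Finset.sum_const, Finset.card_range]; ring
          _ ≤ (1 + C * n) * ‖G x‖ := by nlinarith [norm_nonneg (G x)]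
    calc ‖G' x i‖ * x ≤ (x ^ (i:ℕ) * ‖iteratedDeriv ((i:ℕ)+1) f x‖
          + ((i:ℕ):ℝ) * x ^ ((i:ℕ)-1) * ‖iteratedDeriv (i:ℕ) f x‖) * x :=
        mul_le_mul_of_nonneg_right htri hx0.le
      _ = x ^ (i:ℕ) * ‖iteratedDeriv ((i:ℕ)+1) f x‖ * x
          + ((i:ℕ):ℝ) * x ^ ((i:ℕ)-1) * ‖iteratedDeriv (i:ℕ) f x‖ * x := by ring
      _ ≤ (1 + C * n) * ‖G x‖ + (n:ℝ) * ‖G x‖ := add_le_add hterm1 hterm2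
      _ = ((n:ℝ) + 1 + C * n) * ‖G x‖ := by ring
      _ ≤ (N:ℝ) * ‖G x‖ := mul_le_mul_of_nonneg_right hNge (norm_nonneg _)
  have hT0 : 0 < T := hT.1
  have hTb : T < b := hT.2
  have key : ∀ x₀, 0 < x₀ → x₀ ≤ T → ‖G T‖ ≤ ‖G x₀‖ * (T / x₀) ^ N := by
    intro x₀ hx₀ hx₀T
    have hlog : Real.log x₀ ≤ Real.log T := Real.log_le_log hx₀ hx₀T
    have hmemIoo : ∀ t ∈ Set.Icc (Real.log x₀) (Real.log T), Real.exp t ∈ Set.Ioo 0 b := by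
      intro t ht
      refine ⟨Real.exp_pos t, ?_⟩
      have : Real.exp t ≤ T := by
        calc Real.exp t ≤ Real.exp (Real.log T) := Real.exp_le_exp.mpr ht.2
          _ = T := Real.exp_log hT0
      linarith
    have hHd : ∀ t ∈ Set.Icc (Real.log x₀) (Real.log T),
        HasDerivAt (fun t => G (Real.exp t)) (Real.exp t • G' (Real.exp t)) t := by
      intro t ht
      have hmem := hmemIoo t ht
      have hmem' : Real.exp t ∈ Set.Ioo a b := ⟨lt_trans ha hmem.1, hmem.2⟩
      exact (hGderiv _ hmem').scomp t (Real.hasDerivAt_exp t)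
    have hHb : ∀ t ∈ Set.Ico (Real.log x₀) (Real.log T),
        ‖Real.exp t • G' (Real.exp t)‖ ≤ (N:ℝ) * ‖G (Real.exp t)‖ + 0 := by
      intro t ht
      have hmem := hmemIoo t ⟨ht.1, ht.2.le⟩
      have hexp0 : 0 < Real.exp t := Real.exp_pos t
      rw [add_zero, norm_smul, Real.norm_eq_abs, abs_of_pos hexp0]
      calc Real.exp t * ‖G' (Real.exp t)‖
          ≤ Real.exp t * (((N:ℝ) * ‖G (Real.exp t)‖) / Real.exp t) :=
            mul_le_mul_of_nonneg_left (hGbound _ hmem) hexp0.le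
        _ = (N:ℝ) * ‖G (Real.exp t)‖ := by field_simp
    have hgron := norm_le_gronwallBound_of_norm_deriv_right_le
      (f := fun t => G (Real.exp t)) (f' := fun t => Real.exp t • G' (Real.exp t))
      (δ := ‖G x₀‖) (K := (N:ℝ)) (ε := 0)
      (fun t ht => (hHd t ht).continuousAt.continuousWithinAt)
      (fun t ht => (hHd t ⟨ht.1, ht.2.le⟩).hasDerivWithinAt)
      (le_of_eq (by simp [Real.exp_log hx₀])) hHb (Real.log T) ⟨hlog, le_refl _⟩
    rw [gronwallBound_ε0] at hgron
    have hexpN : Real.exp ((N:ℝ) * (Real.log T - Real.log x₀)) = (T / x₀) ^ N := by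
      rw [Real.exp_nat_mul, Real.exp_sub, Real.exp_log hT0, Real.exp_log hx₀]
    simpa [Real.exp_log hT0, hexpN] using hgron
  -- small x₀ bound and conclusion
  have hb2 : 0 < b / 2 := by linarith
  set δ₂ : ℝ := min 1 (min (b/2) T) with hδ₂
  have hδ₂0 : 0 < δ₂ := lt_min one_pos (lt_min hb2 hT0)
  have final : ∀ x₀, 0 < x₀ → x₀ ≤ δ₂ → ‖G T‖ ≤ (M₁ * T ^ N) * x₀ := by
    intro x₀ h1 h2
    have hx₀1 : x₀ ≤ 1 := h2.trans (min_le_left _ _)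
    have hx₀b : x₀ ≤ b/2 := h2.trans ((min_le_right _ _).trans (min_le_left _ _))
    have hx₀T : x₀ ≤ T := h2.trans ((min_le_right _ _).trans (min_le_right _ _))
    have hGx₀ : ‖G x₀‖ ≤ M₁ * x₀ ^ (N+1) := by
      rw [pi_norm_le_iff_of_nonneg (by positivity)]
      intro i
      rw [hGcomp x₀ h1 i]
      have h3 := hM i x₀ ⟨by nlinarith, hx₀b⟩
      rw [abs_of_pos h1] at h3
      calc x₀ ^ (i:ℕ) * ‖iteratedDeriv (i:ℕ) f x₀‖
          ≤ 1 * (M₁ * x₀ ^ (N+1)) := by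
            refine mul_le_mul (pow_le_one₀ h1.le hx₀1)
              (h3.trans (mul_le_mul_of_nonneg_right (hMle i i.2) (by positivity)))
              (norm_nonneg _) zero_le_one
        _ = M₁ * x₀ ^ (N+1) := one_mul _
    calc ‖G T‖ ≤ ‖G x₀‖ * (T / x₀) ^ N := key x₀ h1 hx₀T
      _ ≤ (M₁ * x₀ ^ (N+1)) * (T / x₀) ^ N :=
          mul_le_mul_of_nonneg_right hGx₀ (by positivity)
      _ = (M₁ * T ^ N) * x₀ := by
          rw [div_pow, pow_succ]
          field_simp
  have hGT0 : ‖G T‖ ≤ 0 := by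
    by_contra hcon
    push_neg at hcon
    set K₀ : ℝ := M₁ * T ^ N with hK₀dd
    have hK₀ : 0 ≤ K₀ := by positivity
    set x₀ : ℝ := min (δ₂/2) (‖G T‖ / (2 * (K₀ + 1))) with hx₀d
    have hx₀0 : 0 < x₀ := lt_min (by linarith) (by positivity)
    have h2 : x₀ ≤ δ₂ := (min_le_left _ _).trans (by linarith)
    have h3 := final x₀ hx₀0 h2
    have h4 : K₀ * x₀ ≤ K₀ * (‖G T‖ / (2 * (K₀ + 1))) :=
      mul_le_mul_of_nonneg_left (min_le_right _ _) hK₀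
    have h5 : K₀ * (‖G T‖ / (2 * (K₀ + 1))) < ‖G T‖ := by
      rw [mul_div_assoc', div_lt_iff₀ (by positivity : (0:ℝ) < 2 * (K₀ + 1))]
      nlinarith
    linarith
  have hGTz : G T = 0 := norm_le_zero_iff.mp hGT0
  have hfin := congrFun hGTz ⟨0, hn0⟩
  simpa [hG] using hfin


/-- Lemma 6 (Pan–Wang, from their previous paper): if a smooth function satisfies the
differential inequality `‖f⁽ⁿ⁾(x)‖ ≤ C ∑_{k<n} ‖f⁽ᵏ⁾(x)‖ / |x|^(n-k)` on an interval
around `0` and vanishes to infinite order at `0`, then `f ≡ 0` on the interval. -/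
theorem flat_implies_zero
    (n : ℕ) (hn : 2 ≤ n) (a b : ℝ) (ha : a < 0) (hb : 0 < b)
    (C : ℝ) (hC : 0 ≤ C) (f : ℝ → ℂ)
    (hsmooth : ∀ k : ℕ, ∀ x ∈ Set.Ioo a b, DifferentiableAt ℝ (iteratedDeriv k f) x)
    (hineq : ∀ x ∈ Set.Ioo a b, x ≠ 0 →
      ‖iteratedDeriv n f x‖ ≤ C * ∑ k ∈ Finset.range n, ‖iteratedDeriv k f x‖ / |x| ^ (n - k))
    (hflat : ∀ k : ℕ, iteratedDeriv k f 0 = 0) :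
    ∀ x ∈ Set.Ioo a b, f x = 0 := by
  intro x hx
  rcases lt_trichotomy x 0 with hneg | h0 | hpos
  · set g : ℝ → ℂ := fun y => f (-y) with hg
    have hgk : ∀ k : ℕ, iteratedDeriv k g = fun y => ((-1:ℝ)^k) • iteratedDeriv k f (-y) :=
      fun k => funext fun y => iteratedDeriv_comp_neg k f y
    have hsmooth' : ∀ k : ℕ, ∀ y ∈ Set.Ioo (-b) (-a),
        DifferentiableAt ℝ (iteratedDeriv k g) y := by
      intro k y hy
      rw [hgk k]
      have hmem : -y ∈ Set.Ioo a b := ⟨by linarith [hy.2], by linarith [hy.1]⟩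
      exact ((hsmooth k (-y) hmem).comp y (differentiableAt_id.neg)).const_smul ((-1:ℝ)^k)
    have hnorm : ∀ k : ℕ, ∀ y : ℝ, ‖iteratedDeriv k g y‖ = ‖iteratedDeriv k f (-y)‖ := by
      intro k y
      rw [hgk k]
      simp [norm_smul]
    have hineq' : ∀ y ∈ Set.Ioo (-b) (-a), y ≠ 0 →
        ‖iteratedDeriv n g y‖ ≤ C * ∑ k ∈ Finset.range n,
          ‖iteratedDeriv k g y‖ / |y| ^ (n - k) := by
      intro y hy hy0
      have hmem : -y ∈ Set.Ioo a b := ⟨by linarith [hy.2], by linarith [hy.1]⟩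
      rw [hnorm n y]
      have h1 := hineq (-y) hmem (neg_ne_zero.mpr hy0)
      rw [abs_neg] at h1
      refine h1.trans (le_of_eq ?_)
      congr 1
      exact Finset.sum_congr rfl fun k _ => by rw [hnorm k y]
    have hflat' : ∀ k : ℕ, iteratedDeriv k g 0 = 0 := by
      intro k
      rw [hgk k]
      simp [hflat k]
    have hres := pos_side n hn (-b) (-a) (by linarith) (by linarith) C hC g hsmooth' hineq'
      hflat' (-x) ⟨by linarith, by linarith [hx.1]⟩
    simpa [hg] using hres
  · rw [h0]
    have h1 := hflat 0
    rwa [iteratedDeriv_zero] at h1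
  · exact pos_side n hn a b ha hb C hC f hsmooth hineq hflat x ⟨hpos, hx.2⟩
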